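/- Let G = (V,E,ω) be a weighted undirected graph and k ≥ 1 an integer. Define the k-neighborhood graph 𝒩 = (V,F) where F contains, for each vertex v, edges to its k nearest neighbors (by edge weight, ties broken by vertex ID), or all neighbors if deg(v) < k. Then for every vertex v and every u ∈ S_G[k](v) (the k closest reachable vertices to v in G), any shortest u–v path in G with the minimum number of hops is entirely contained in 𝒩. -/

import Mathlib

open scoped ENNReal

namespace Stmt13

variable {V : Type*}

/-- Endpoint of a walk starting at `u` with subsequent vertices given by the list. -/
def last : V → List V → V
  | u, [] => u
  | _, x :: xs => last x xs

/-- Weight of a walk starting at `u` with subsequent vertices given by the list. -/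
noncomputable def cost (w : V → V → ℝ≥0∞) : V → List V → ℝ≥0∞
  | _, [] => 0
  | u, x :: xs => w u x + cost w x xs

/-- `h`-hop-limited distance from `u` to `v` (non-edges have weight `⊤`). -/
noncomputable def hdist (w : V → V → ℝ≥0∞) (h : ℕ) (u v : V) : ℝ≥0∞ :=
  ⨅ p ∈ {p : List V | p.length ≤ h ∧ last u p = v}, cost w u p

/-- Shortest-path distance from `u` to `v`. -/
noncomputable def dist (w : V → V → ℝ≥0∞) (u v : V) : ℝ≥0∞ :=
  ⨅ h : ℕ, hdist w h u v

/-- `S` is a set of (at most) `k` closest reachable vertices to `v` (excluding `v`),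
with ties broken arbitrarily: members of `S` are reachable and distinct from `v`,
`|S| ≤ k`, every member is at least as close as every reachable non-member, and `S`
has exactly `k` elements unless it already contains all reachable vertices. -/
def IsKClosest [Fintype V] (w : V → V → ℝ≥0∞) (k : ℕ) (v : V) (S : Finset V) : Prop :=
  (∀ u ∈ S, u ≠ v ∧ dist w v u < ⊤) ∧ S.card ≤ k ∧
  (∀ y ∈ S, ∀ z, z ∉ S → z ≠ v → dist w v z < ⊤ → dist w v y ≤ dist w v z) ∧
  (∀ z, z ∉ S → z ≠ v → dist w v z < ⊤ → S.card = k)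

/-- Weight function of the union `G ∪ G^(k)` of the graph with the `k`-shortcut hopset:
hopset edges `(u,v)` (present when `u ∈ S v` or `v ∈ S u`) get weight `d_G(u,v)`. -/
noncomputable def unionW [Fintype V] [DecidableEq V] (w : V → V → ℝ≥0∞) (S : V → Finset V)
    (u v : V) : ℝ≥0∞ :=
  if u ∈ S v ∨ v ∈ S u then min (w u v) (dist w u v) else w u v


/-- Minimum number of hops of a minimum-weight `u`–`v` path. -/
noncomputable def minHopsD (w : V → V → ℝ≥0∞) (u v : V) : ℕ :=
  sInf {ℓ : ℕ | ∃ p : List V, p.length = ℓ ∧ last u p = v ∧ cost w u p = dist w u v}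

/-- Strict comparison of vertices by distance, with ties broken by the tie-breaking
key `tie` (lexicographically). -/
def keyLt (d : V → ℝ≥0∞) (tie : V → ℕ × ℕ) (y z : V) : Prop :=
  Prod.Lex (· < ·) (Prod.Lex (· < ·) (· < ·)) (d y, tie y) (d z, tie z)

/-- `S` is the set of the `k` closest vertices of `dom` to `v` (excluding `v`) with
respect to the distance function `d`, with ties broken by the key `tie`. -/
def IsKNear (d : V → ℝ≥0∞) (tie : V → ℕ × ℕ) (dom : Finset V) (k : ℕ) (v : V)
    (S : Finset V) : Prop :=
  S ⊆ dom ∧ v ∉ S ∧ S.card ≤ k ∧ (∀ y ∈ S, d y < ⊤) ∧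
  (∀ y ∈ S, ∀ z ∈ dom, z ∉ S → z ≠ v → d z < ⊤ → keyLt d tie y z) ∧
  (∀ z ∈ dom, z ≠ v → d z < ⊤ → z ∉ S → S.card = k)

/-- `nb` assigns to every vertex its `k` nearest neighbors, by edge weight with ties
broken by vertex identifiers `rank` (all neighbors if the degree is less than `k`). -/
def IsKNbhd (w : V → V → ℝ≥0∞) (k : ℕ) (rank : V → ℕ) (nb : V → Finset V) : Prop :=
  ∀ v, (∀ u ∈ nb v, u ≠ v ∧ w v u < ⊤) ∧ (nb v).card ≤ k ∧
    (∀ y ∈ nb v, ∀ z, z ∉ nb v → z ≠ v → w v z < ⊤ →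
      w v y < w v z ∨ (w v y = w v z ∧ rank y < rank z)) ∧
    (∀ z, z ≠ v → w v z < ⊤ → z ∉ nb v → (nb v).card = k)

/-- Weight function of the `k`-neighborhood graph `𝒩`: the edge `(u,v)` is kept iff
`v` is among the `k` nearest neighbors of `u` or vice versa. -/
noncomputable def nbhdW [DecidableEq V] (w : V → V → ℝ≥0∞) (nb : V → Finset V)
    (u v : V) : ℝ≥0∞ :=
  if v ∈ nb u ∨ u ∈ nb v then w u v else ⊤

/-- Every minimum-weight, minimum-hop path from `v` to one of its `k` closest
reachable vertices is entirely contained in the `k`-neighborhood graph `𝒩`. -/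
theorem last_append (a : V) (q r : List V) : last a (q ++ r) = last (last a q) r := by
  induction q generalizing a with
  | nil => rfl
  | cons x xs ih => simpa [last] using ih x

theorem cost_append (w : V → V → ℝ≥0∞) (a : V) (q r : List V) :
    cost w a (q ++ r) = cost w a q + cost w (last a q) r := by
  induction q generalizing a with
  | nil => simp [cost, last]
  | cons x xs ih => simp [cost, last, ih x, add_assoc]

theorem dist_le_cost (w : V → V → ℝ≥0∞) (a y : V) (q : List V) (h : last a q = y) :
    dist w a y ≤ cost w a q := by
  refine iInf_le_of_le q.length ?_
  exact iInf₂_le q ⟨le_rfl, h⟩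

theorem exists_path_lt (w : V → V → ℝ≥0∞) (a y : V) (c : ℝ≥0∞)
    (h : dist w a y < c) : ∃ q : List V, last a q = y ∧ cost w a q < c := by
  rw [dist] at h
  obtain ⟨h0, hh⟩ := iInf_lt_iff.mp h
  rw [hdist] at hh
  obtain ⟨q, hq⟩ := iInf_lt_iff.mp hh
  obtain ⟨hqmem, hqc⟩ := iInf_lt_iff.mp hq
  exact ⟨q, hqmem.2, hqc⟩

theorem keyLt_iff (d : V → ℝ≥0∞) (tie : V → ℕ × ℕ) (y z : V) :
    keyLt d tie y z ↔ d y < d z ∨ (d y = d z ∧ ((tie y).1 < (tie z).1 ∨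
      ((tie y).1 = (tie z).1 ∧ (tie y).2 < (tie z).2))) := by
  simp [keyLt, Prod.lex_def]

theorem keyLt_asymm (d : V → ℝ≥0∞) (tie : V → ℕ × ℕ) {y z : V}
    (h1 : keyLt d tie y z) (h2 : keyLt d tie z y) : False := by
  rw [keyLt_iff] at h1 h2
  rcases h1 with h1 | ⟨e1, h1⟩ <;> rcases h2 with h2 | ⟨e2, h2⟩
  · exact absurd h2 (lt_asymm h1)
  · rw [e2] at h1; exact lt_irrefl _ h1
  · rw [e1] at h2; exact lt_irrefl _ h2
  · omega

theorem keyLt_irrefl (d : V → ℝ≥0∞) (tie : V → ℕ × ℕ) (y : V) : ¬ keyLt d tie y y := by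
  rw [keyLt_iff]
  rintro (h | ⟨_, h | ⟨_, h⟩⟩)
  · exact lt_irrefl _ h
  · omega
  · omega

theorem getD_eq_last (p : List V) (j : ℕ) (v : V) (h : j ≤ p.length) :
    (v :: p).getD j v = last v (p.take j) := by
  induction p generalizing v j with
  | nil =>
    simp at h; subst h; rfl
  | cons x xs ih =>
    cases j with
    | zero => rfl
    | succ n =>
      have hn : n ≤ xs.length := by simpa using h
      have h1 : (v :: x :: xs).getD (n + 1) v = (x :: xs).getD n v := by
        simp [List.getD_cons_succ]
      have h2 : (x :: xs).getD n v = (x :: xs).getD n x := by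
        have hlt : n < (x :: xs).length := by simp; omega
        rw [List.getD_eq_getElem _ _ hlt, List.getD_eq_getElem _ _ hlt]
      rw [h1, h2, ih n x hn]
      simp [last]

theorem take_succ_exists (p : List V) (j : ℕ) (h : j < p.length) :
    ∃ z, p.take (j + 1) = p.take j ++ [z] := by
  induction p generalizing j with
  | nil => simp at h
  | cons x xs ih =>
    cases j with
    | zero => exact ⟨x, by simp⟩
    | succ n =>
      obtain ⟨z, hz⟩ := ih n (by simpa using Nat.lt_of_succ_lt_succ h)
      exact ⟨z, by simp [hz]⟩

theorem min_hop_path_in_neighborhood_graph [Fintype V] [DecidableEq V]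
    (w : V → V → ℝ≥0∞) (hsymm : ∀ u v, w u v = w v u)
    (k : ℕ) (hk : 1 ≤ k)
    (rank : V → ℕ) (hrank : Function.Injective rank)
    (nb : V → Finset V) (hnb : IsKNbhd w k rank nb)
    (v u : V) (S : Finset V)
    (hS : IsKNear (dist w v) (fun x => (minHopsD w v x, rank x)) Finset.univ k v S)
    (hu : u ∈ S)
    (p : List V) (hlast : last v p = u) (hcost : cost w v p = dist w v u)
    (hmin : ∀ q : List V, last v q = u → cost w v q = dist w v u → p.length ≤ q.length) :
    ∀ j, j + 1 ≤ p.length →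
      ((v :: p).getD (j + 1) v) ∈ nb ((v :: p).getD j v) ∨
      ((v :: p).getD j v) ∈ nb ((v :: p).getD (j + 1) v) := by
  intro j hj
  by_contra hcon
  push_neg at hcon
  rw [getD_eq_last p (j+1) v hj, getD_eq_last p j v (Nat.le_of_succ_le hj)] at hcon
  obtain ⟨h1, h2⟩ := hcon
  have hDfin : dist w v u < ⊤ := hS.2.2.2.1 u hu
  have hsplit : ∀ i, cost w v (p.take i) + cost w (last v (p.take i)) (p.drop i)
      = dist w v u := by
    intro i
    rw [← hcost, ← cost_append, List.take_append_drop]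
  have hlast_drop : ∀ i, last (last v (p.take i)) (p.drop i) = u := by
    intro i
    rw [← last_append, List.take_append_drop]; exact hlast
  have hsuffix_ne : ∀ i, cost w (last v (p.take i)) (p.drop i) ≠ ⊤ := by
    intro i h
    have hs := hsplit i
    rw [h, add_top] at hs
    rw [← hs] at hDfin
    exact lt_irrefl _ hDfin
  have hprefix_ne : ∀ i, cost w v (p.take i) ≠ ⊤ := by
    intro i h
    have hs := hsplit i
    rw [h, top_add] at hs
    rw [← hs] at hDfin
    exact lt_irrefl _ hDfin
  have F3 : ∀ i, dist w v (last v (p.take i)) = cost w v (p.take i) := by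
    intro i
    refine le_antisymm (dist_le_cost w v _ _ rfl) ?_
    by_contra hle
    push_neg at hle
    obtain ⟨q, hql, hqc⟩ := exists_path_lt w v _ _ hle
    have hnew : dist w v u ≤ cost w v (q ++ p.drop i) :=
      dist_le_cost w v u _ (by rw [last_append, hql]; exact hlast_drop i)
    rw [cost_append, hql] at hnew
    have hlt2 : cost w v q + cost w (last v (p.take i)) (p.drop i)
        < cost w v (p.take i) + cost w (last v (p.take i)) (p.drop i) :=
      ENNReal.add_lt_add_right (hsuffix_ne i) hqc
    rw [hsplit i] at hlt2
    exact lt_irrefl _ (lt_of_le_of_lt hnew hlt2)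
  have hpre_le : ∀ i, cost w v (p.take i) ≤ dist w v u := by
    intro i; rw [← hsplit i]; exact le_self_add
  have htakelen : ∀ i, i ≤ p.length → (p.take i).length = i := by
    intro i hi; rw [List.length_take]; omega
  have hMu : minHopsD w v u = p.length := by
    have hmem : p.length ∈ {ℓ : ℕ | ∃ q : List V,
        q.length = ℓ ∧ last v q = u ∧ cost w v q = dist w v u} := ⟨p, rfl, hlast, hcost⟩
    refine le_antisymm (Nat.sInf_le hmem) ?_
    obtain ⟨q, hq1, hq2, hq3⟩ := Nat.sInf_mem (⟨p.length, hmem⟩ : Set.Nonempty _)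
    calc p.length ≤ q.length := hmin q hq2 hq3
      _ = _ := hq1
  -- instantiated facts (before folding)
  obtain ⟨z, hz0⟩ := take_succ_exists p j (by omega)
  have hxj1z : last v (p.take (j+1)) = z := by
    rw [hz0, last_append]; rfl
  rw [← hxj1z] at hz0
  have F3A : dist w v (last v (p.take j)) = cost w v (p.take j) := F3 j
  have F3B : dist w v (last v (p.take (j+1))) = cost w v (p.take (j+1)) := F3 (j+1)
  have hj1_le : dist w v (last v (p.take (j+1))) ≤ dist w v u := by
    rw [F3B]; exact hpre_le (j+1)
  have hfinA : dist w v (last v (p.take j)) ≠ ⊤ := by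
    rw [F3A]; exact hprefix_ne j
  have hMxj : minHopsD w v (last v (p.take j)) ≤ j :=
    Nat.sInf_le ⟨p.take j, htakelen j (by omega), rfl, (F3 j).symm⟩
  have hxju : last v (p.take j) ≠ u := by
    intro he
    have h3 : cost w v (p.take j) = dist w v u := by rw [← he]; exact (F3 j).symm
    have hlen := hmin (p.take j) he h3
    rw [htakelen j (by omega)] at hlen
    omega
  set A := last v (p.take j) with hA
  set B := last v (p.take (j+1)) with hB
  have hcost_succ : cost w v (p.take (j+1)) = cost w v (p.take j) + w A B := by
    rw [hz0, cost_append, ← hA]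
    simp [cost]
  have hdist_succ : dist w v B = dist w v A + w A B := by
    rw [F3B, hcost_succ, F3A]
  have hwfin : w A B < ⊤ := by
    have h := hprefix_ne (j+1)
    rw [hcost_succ] at h
    exact lt_of_le_of_lt le_add_self (lt_top_iff_ne_top.mpr h)
  have hBA : B ≠ A := by
    intro he
    have hql : last v (p.take j ++ p.drop (j+1)) = u := by
      rw [last_append, ← hA, ← he, hB]
      exact hlast_drop (j+1)
    have hcle : cost w v (p.take j ++ p.drop (j+1)) ≤ dist w v u := by
      rw [cost_append, ← hA, ← he, hB, ← hsplit (j+1)]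
      exact add_le_add (by rw [hcost_succ]; exact le_self_add) le_rfl
    have hlen := hmin _ hql (le_antisymm hcle (dist_le_cost w v u _ hql))
    rw [List.length_append, List.length_take, List.length_drop] at hlen
    omega
  have hNcard : (nb A).card = k := (hnb A).2.2.2 B hBA hwfin h1
  have hKlt : ∀ y, (dist w v y < dist w v u ∨ (dist w v y = dist w v u ∧
      (minHopsD w v y < minHopsD w v u ∨
        (minHopsD w v y = minHopsD w v u ∧ rank y < rank u)))) →
      keyLt (dist w v) (fun x => (minHopsD w v x, rank x)) y u := by
    intro y h
    rw [keyLt_iff]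
    simpa using h
  have hkey_xj : keyLt (dist w v) (fun x => (minHopsD w v x, rank x)) A u := by
    apply hKlt
    rcases lt_or_eq_of_le (le_trans (le_of_eq F3A) (hpre_le j)) with h | h
    · exact Or.inl h
    · exact Or.inr ⟨h, Or.inl (by rw [hMu]; omega)⟩
  have hnbkey : ∀ y ∈ nb A, keyLt (dist w v) (fun x => (minHopsD w v x, rank x)) y u := by
    intro y hy
    have hly : last v (p.take j ++ [y]) = y := by rw [last_append]; rfl
    have hcy : cost w A [y] = w A y := by simp [cost]
    have hdy : dist w v y ≤ dist w v A + w A y := by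
      have hc := dist_le_cost w v y (p.take j ++ [y]) hly
      rw [cost_append, ← hA, hcy, ← F3A] at hc
      exact hc
    rcases (hnb A).2.2.1 y hy B h1 hBA hwfin with hlt | ⟨heq, hrk⟩
    · refine hKlt y (Or.inl ?_)
      have hlt2 : dist w v y < dist w v A + w A B :=
        lt_of_le_of_lt hdy (ENNReal.add_lt_add_left hfinA hlt)
      rw [← hdist_succ] at hlt2
      exact lt_of_lt_of_le hlt2 hj1_le
    · have hyB : dist w v y ≤ dist w v B := by rw [hdist_succ, ← heq]; exact hdy
      rcases lt_or_eq_of_le (le_trans hyB hj1_le) with h | h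
      · exact hKlt y (Or.inl h)
      · have hBD : dist w v B = dist w v u := le_antisymm hj1_le (h ▸ hyB)
        have hyeq : cost w v (p.take j) + w A y = dist w v y := by
          rw [heq, ← F3A, ← hdist_succ, hBD, h]
        have hMy : minHopsD w v y ≤ j + 1 :=
          Nat.sInf_le ⟨p.take j ++ [y],
            by simp [List.length_append, htakelen j (by omega)],
            hly,
            by rw [cost_append, ← hA, hcy, hyeq]⟩
        rcases Nat.lt_or_ge (j+1) p.length with hjlt | hjge
        · exact hKlt y (Or.inr ⟨h, Or.inl (by rw [hMu]; omega)⟩)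
        · have hjeq : j + 1 = p.length := le_antisymm hj hjge
          have hBu : B = u := by rw [hB, hjeq, List.take_length]; exact hlast
          have hle2 : minHopsD w v y ≤ minHopsD w v u := by rw [hMu]; omega
          rcases lt_or_eq_of_le hle2 with h' | h'
          · exact hKlt y (Or.inr ⟨h, Or.inl h'⟩)
          · exact hKlt y (Or.inr ⟨h, Or.inr ⟨h', by rw [← hBu]; exact hrk⟩⟩)
  have huN : u ∉ nb A := fun h => keyLt_irrefl _ _ u (hnbkey u h)
  have hxjN : A ∉ nb A := fun h => ((hnb A).1 A h).1 rfl
  have hTS : ∀ t ∈ insert u ((insert A (nb A)).erase v), t ∈ S := by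
    intro t ht
    rcases Finset.mem_insert.mp ht with rfl | ht'
    · exact hu
    · have htv : t ≠ v := Finset.ne_of_mem_erase ht'
      have hkt : keyLt (dist w v) (fun x => (minHopsD w v x, rank x)) t u := by
        rcases Finset.mem_insert.mp (Finset.mem_of_mem_erase ht') with rfl | htm
        · exact hkey_xj
        · exact hnbkey t htm
      have htfin : dist w v t < ⊤ := by
        rcases (keyLt_iff _ _ _ _).mp hkt with hh | ⟨hh, _⟩
        · exact lt_trans hh hDfin
        · rw [hh]; exact hDfin
      by_contra hts
      exact keyLt_asymm _ _ (hS.2.2.2.2.1 u hu t (Finset.mem_univ t) hts htv htfin) hkt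
  have hc1 : (insert A (nb A)).card = k + 1 := by
    rw [Finset.card_insert_of_notMem hxjN, hNcard]
  have hc2 := Finset.pred_card_le_card_erase (s := insert A (nb A)) (a := v)
  have huE : u ∉ (insert A (nb A)).erase v := by
    intro h
    rcases Finset.mem_insert.mp (Finset.mem_of_mem_erase h) with h' | h'
    · exact hxju h'.symm
    · exact huN h'
  have hc3 : (insert u ((insert A (nb A)).erase v)).card
      = ((insert A (nb A)).erase v).card + 1 := Finset.card_insert_of_notMem huE
  have hc4 : (insert u ((insert A (nb A)).erase v)).card ≤ S.card :=
    Finset.card_le_card (fun t ht => hTS t ht)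
  have hc5 := hS.2.2.1
  omega


end Stmt13
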